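/- For odd n = 2k+1 with n ≥ 5, the schedule generated by the circle design has games-played difference index exactly 2. -/

import Mathlib

/-- `f` lists the games of a single round-robin tournament on `n` teams:
positions `0, ..., N-1` are in bijection with the unordered pairs of distinct teams. -/
def isSchedule (n N : ℕ) (f : ℕ → Sym2 (Fin n)) : Prop :=
  (∀ i, i < N → ¬ (f i).IsDiag) ∧
  ∀ p : Sym2 (Fin n), ¬ p.IsDiag → ∃! i, i < N ∧ f i = p

/-- The schedule has guaranteed rest time at least `b`: any two games involving a
common team `t` are separated by at least `b` games not involving `t`. -/
def hasRest (n N : ℕ) (f : ℕ → Sym2 (Fin n)) (b : ℕ) : Prop :=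
  ∀ t : Fin n, ∀ i j, i < j → j < N → t ∈ f i → t ∈ f j →
    b ≤ ((Finset.Ioo i j).filter (fun l => t ∉ f l)).card

/-- Number of games played by team `t` in the first `m` games. -/
def played (n : ℕ) (f : ℕ → Sym2 (Fin n)) (t : Fin n) (m : ℕ) : ℕ :=
  ((Finset.range m).filter (fun i => t ∈ f i)).card

/-- The games-played difference index is at most `p`. -/
def gpLe (n N : ℕ) (f : ℕ → Sym2 (Fin n)) (p : ℕ) : Prop :=
  ∀ m, m ≤ N → ∀ t1 t2 : Fin n, played n f t1 m ≤ played n f t2 m + p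

/-- The rest of team `t` going into the game at position `i`: the number of games since
`t`'s previous game, where all teams play an imaginary game one slot before game `0`. -/
def rest (n : ℕ) (f : ℕ → Sym2 (Fin n)) (t : Fin n) (i : ℕ) : ℕ :=
  ((Finset.range i).filter (fun j => ∀ l, j ≤ l → l < i → t ∉ f l)).card

/-- The rest difference index is at most `d`. -/
def rdLe (n N : ℕ) (f : ℕ → Sym2 (Fin n)) (d : ℕ) : Prop :=
  ∀ i, i < N → ∀ t1 t2 : Fin n, t1 ∈ f i → t2 ∈ f i →
    rest n f t1 i ≤ rest n f t2 i + d

/-- Circle design for odd `n = 2k+1` teams `0, ..., 2k` (team `t` is team `t+1` of the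
paper): a dummy team is fixed at the top-left; the `2k+1` real teams occupy cyclic
positions `0, ..., 2k` (top-row columns `1..k` left to right, then bottom-row columns
`k` down to `0`), each rotating one step per round; the team at cyclic position `2k`
(below the dummy) sits out the round. -/
def circleTeamO (k : ℕ) (r c : ℕ) : Fin (2*k+1) :=
  ⟨(c + (2*k+1) - r % (2*k+1)) % (2*k+1), Nat.mod_lt _ (by omega)⟩

/-- The `i`-th game (0-indexed) of the asynchronous circle-design schedule for `2k+1`
teams: round `i / k`, column `i % k + 1`, columns read left to right. -/
def circleGameO (k : ℕ) (i : ℕ) : Sym2 (Fin (2*k+1)) :=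
  s(circleTeamO k (i / k) (i % k), circleTeamO k (i / k) (2*k - 1 - i % k))

/-- For odd `n = 2k+1 ≥ 5`, the circle-design schedule has games-played difference
index exactly `2`. -/

lemma mod2 (n x : ℕ) (hn : 0 < n) (hx : x < 2*n) :
    (x % n = x ∧ x < n) ∨ (x % n + n = x ∧ n ≤ x) := by
  rcases Nat.lt_or_ge x n with h | h
  · exact Or.inl ⟨Nat.mod_eq_of_lt h, h⟩
  · refine Or.inr ⟨?_, h⟩
    rw [Nat.mod_eq_sub_mod h, Nat.mod_eq_of_lt (by omega)]
    omega

lemma mod_helper (n r c t : ℕ) (hn : 0 < n) (hc : c < n) (ht : t < n) :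
    (c + n - r % n) % n = t ↔ (t + r) % n = c := by
  have h1 : r % n < n := Nat.mod_lt _ hn
  have h2 : (t + r) % n = (t + r % n) % n := (Nat.add_mod_mod t r n).symm
  rw [h2]
  generalize r % n = a at *
  have k1 := mod2 n (c + n - a) hn (by omega)
  have k2 := mod2 n (t + a) hn (by omega)
  omega

lemma teamO_eq (k r c : ℕ) (hc : c < 2*k+1) (t : Fin (2*k+1)) :
    circleTeamO k r c = t ↔ (t.val + r) % (2*k+1) = c := by
  rw [Fin.ext_iff]
  exact mod_helper (2*k+1) r c t.val (by omega) hc t.isLt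

lemma mem_gameO (k : ℕ) (hk : 1 ≤ k) (t : Fin (2*k+1)) (i : ℕ) :
    t ∈ circleGameO k i ↔ ((t.val + i / k) % (2*k+1) = i % k ∨
      (t.val + i / k) % (2*k+1) + i % k = 2*k - 1) := by
  have hik : i % k < k := Nat.mod_lt _ hk
  unfold circleGameO
  rw [Sym2.mem_iff]
  rw [eq_comm (b := circleTeamO k (i/k) (i % k)),
      eq_comm (b := circleTeamO k (i/k) (2*k - 1 - i % k))]
  rw [teamO_eq k _ _ (by omega) t, teamO_eq k _ _ (by omega) t]
  constructor <;> rintro (h | h)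
  · exact Or.inl h
  · exact Or.inr (by omega)
  · exact Or.inl h
  · exact Or.inr (by omega)

lemma div_cancel (k a c : ℕ) (hk : 1 ≤ k) (hc : c < k) : (k * a + c) / k = a := by
  rw [Nat.mul_add_div hk, Nat.div_eq_of_lt hc]
  omega

lemma played_le (k : ℕ) (hk : 1 ≤ k) (t : Fin (2*k+1)) (m : ℕ) :
    played (2*k+1) (circleGameO k) t m ≤ m / k + 1 := by
  unfold played
  have h := Finset.card_le_card_of_injOn (f := fun i => i / k)
    (s := (Finset.range m).filter (fun i => t ∈ circleGameO k i))
    (t := Finset.range (m/k+1)) ?_ ?_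
  · simpa using h
  · intro i hi
    simp only [Finset.mem_coe, Finset.mem_filter, Finset.mem_range] at hi ⊢
    exact Nat.lt_succ_of_le (Nat.div_le_div_right (Nat.le_of_lt hi.1))
  · intro i hi j hj hij
    simp only [Finset.coe_filter, Set.mem_setOf_eq, Finset.mem_range] at hi hj
    rw [mem_gameO k hk] at hi hj
    simp only at hij
    have d1 := Nat.div_add_mod i k
    have d2 := Nat.div_add_mod j k
    have m1 : i % k < k := Nat.mod_lt _ hk
    have m2 : j % k < k := Nat.mod_lt _ hk
    rw [hij] at hi d1
    rcases hi.2 with h1 | h1 <;> rcases hj.2 with h2 | h2 <;> omega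


lemma le_played (k : ℕ) (hk : 1 ≤ k) (tm : Fin (2*k+1)) (m : ℕ) (hm : m ≤ (2*k+1)*k) :
    m / k ≤ played (2*k+1) (circleGameO k) tm m + 1 := by
  set r := m / k with hr
  have hrn : r ≤ 2*k+1 := by
    have h : m / k ≤ ((2*k+1)*k)/k := Nat.div_le_div_right hm
    rwa [Nat.mul_div_cancel _ hk] at h
  set col : ℕ → ℕ := fun r' =>
    if (tm.val + r') % (2*k+1) < k then (tm.val + r') % (2*k+1)
    else 2*k-1 - (tm.val + r') % (2*k+1) with hcol
  set S := (Finset.range r).filter (fun r' => ¬ (tm.val + r') % (2*k+1) = 2*k) with hS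
  have hcolS : ∀ r' ∈ S, col r' < k := by
    intro r' hr'
    simp only [hS, Finset.mem_filter, Finset.mem_range] at hr'
    have hp : (tm.val + r') % (2*k+1) < 2*k+1 := Nat.mod_lt _ (by omega)
    simp only [hcol]; split <;> omega
  have hT : ((Finset.range r).filter (fun r' => (tm.val + r') % (2*k+1) = 2*k)).card ≤ 1 := by
    rw [Finset.card_le_one]
    intro a ha b hb
    simp only [Finset.mem_filter, Finset.mem_range] at ha hb
    have k1 := mod2 (2*k+1) (tm.val + a) (by omega) (by have := tm.isLt; omega)
    have k2 := mod2 (2*k+1) (tm.val + b) (by omega) (by have := tm.isLt; omega)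
    omega
  have hScard : r - 1 ≤ S.card := by
    rw [hS, Finset.filter_not, Finset.card_sdiff_of_subset (Finset.filter_subset _ _), Finset.card_range]
    omega
  have hinj := Finset.card_le_card_of_injOn (f := fun r' => k * r' + col r')
    (s := S) (t := (Finset.range m).filter (fun i => tm ∈ circleGameO k i)) ?_ ?_
  · unfold played; omega
  · intro r' hr'
    have hc := hcolS r' hr'
    simp only [hS, Finset.mem_coe, Finset.mem_filter, Finset.mem_range] at hr'
    obtain ⟨hr1, hr2⟩ := hr'
    have hdiv : (k * r' + col r') / k = r' := div_cancel k r' _ hk hc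
    have hmod : (k * r' + col r') % k = col r' := by
      rw [Nat.mul_add_mod, Nat.mod_eq_of_lt hc]
    simp only [Finset.mem_coe, Finset.mem_filter, Finset.mem_range]
    refine ⟨?_, ?_⟩
    · calc k * r' + col r' < k * (r' + 1) := by rw [Nat.mul_succ]; omega
        _ ≤ k * r := Nat.mul_le_mul_left k hr1
        _ ≤ m := by rw [Nat.mul_comm]; exact Nat.div_mul_le_self m k
    · rw [mem_gameO k hk, hdiv, hmod]
      have hp : (tm.val + r') % (2*k+1) < 2*k+1 := Nat.mod_lt _ (by omega)
      simp only [hcol]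
      split
      · exact Or.inl rfl
      · right; omega
  · intro a ha b hb hab
    have ca := hcolS a ha
    have cb := hcolS b hb
    simp only at hab
    rw [← div_cancel k a (col a) hk ca, hab, div_cancel k b (col b) hk cb]

lemma mod_val (n x : ℕ) (hn : 0 < n) (hx : x < 2*n) (h : n ≤ x) : x % n = x - n := by
  rw [Nat.mod_eq_sub_mod h, Nat.mod_eq_of_lt (by omega)]

theorem stmt13 (k : ℕ) (hk : 2 ≤ k) :
    gpLe (2*k+1) ((2*k+1)*(2*k)/2) (circleGameO k) 2 ∧
    ¬ gpLe (2*k+1) ((2*k+1)*(2*k)/2) (circleGameO k) 1 := by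
  have hN : (2*k+1)*(2*k)/2 = (2*k+1)*k := by
    have h : (2*k+1)*(2*k) = ((2*k+1)*k)*2 := by ring
    rw [h, Nat.mul_div_cancel _ (by norm_num)]
  constructor
  · intro m hm t1 t2
    rw [hN] at hm
    have h1 := played_le k (by omega) t1 m
    have h2 := le_played k (by omega) t2 m hm
    omega
  · intro hle
    have hm : 2*k+1 ≤ (2*k+1)*(2*k)/2 := by
      rw [hN]; exact Nat.le_mul_of_pos_right _ (by omega)
    have p1 : 2*k-3 < 2*k+1 := by omega
    have p2 : 2*k < 2*k+1 := by omega
    have h := hle (2*k+1) hm ⟨2*k-3, p1⟩ ⟨2*k, p2⟩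
    have hA : 3 ≤ played (2*k+1) (circleGameO k) ⟨2*k-3, p1⟩ (2*k+1) := by
      unfold played
      have hval : (⟨2*k-3, p1⟩ : Fin (2*k+1)).val = 2*k-3 := rfl
      have hsub : ({min (k-1) 2, k+1, 2*k} : Finset ℕ) ⊆
          (Finset.range (2*k+1)).filter
            (fun i => (⟨2*k-3, p1⟩ : Fin (2*k+1)) ∈ circleGameO k i) := by
        intro x hx
        simp only [Finset.mem_insert, Finset.mem_singleton] at hx
        simp only [Finset.mem_filter, Finset.mem_range]
        rcases hx with h' | h' | h' <;> subst h'
        · refine ⟨by omega, ?_⟩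
          rw [mem_gameO k (by omega), hval,
              Nat.div_eq_of_lt (show min (k-1) 2 < k by omega),
              Nat.mod_eq_of_lt (show min (k-1) 2 < k by omega)]
          have := Nat.mod_eq_of_lt (show 2*k-3+0 < 2*k+1 by omega)
          omega
        · refine ⟨by omega, ?_⟩
          have e1 : (k+1) / k = 1 := by
            have h2 := div_cancel k 1 1 (by omega) (by omega)
            rw [show k*1+1 = k+1 by omega] at h2; exact h2
          have e2 : (k+1) % k = 1 := by
            have h3 := Nat.div_add_mod (k+1) k
            rw [e1] at h3; omega
          rw [mem_gameO k (by omega), hval, e1, e2]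
          have := Nat.mod_eq_of_lt (show 2*k-3+1 < 2*k+1 by omega)
          omega
        · refine ⟨by omega, ?_⟩
          have e1 : (2*k) / k = 2 := by
            have h2 := div_cancel k 2 0 (by omega) (by omega)
            rw [show k*2+0 = 2*k by omega] at h2; exact h2
          have e2 : (2*k) % k = 0 := by
            have h3 := Nat.div_add_mod (2*k) k
            rw [e1] at h3; omega
          rw [mem_gameO k (by omega), hval, e1, e2]
          have := Nat.mod_eq_of_lt (show 2*k-3+2 < 2*k+1 by omega)
          omega
      have hcard := Finset.card_le_card hsub
      have h3 : ({min (k-1) 2, k+1, 2*k} : Finset ℕ).card = 3 := by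
        rw [Finset.card_insert_of_notMem (by simp; omega),
            Finset.card_insert_of_notMem (by simp; omega), Finset.card_singleton]
      omega
    have hB : played (2*k+1) (circleGameO k) ⟨2*k, p2⟩ (2*k+1) ≤ 1 := by
      unfold played
      have hval : (⟨2*k, p2⟩ : Fin (2*k+1)).val = 2*k := rfl
      have hsub : (Finset.range (2*k+1)).filter
          (fun i => (⟨2*k, p2⟩ : Fin (2*k+1)) ∈ circleGameO k i) ⊆ {k} := by
        intro i hi
        simp only [Finset.mem_filter, Finset.mem_range] at hi
        obtain ⟨hi1, hi2⟩ := hi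
        rw [mem_gameO k (by omega), hval] at hi2
        simp only [Finset.mem_singleton]
        rcases Nat.lt_or_ge i k with hc1 | hc1
        · rw [Nat.div_eq_of_lt hc1, Nat.mod_eq_of_lt hc1] at hi2
          have := Nat.mod_eq_of_lt (show 2*k+0 < 2*k+1 by omega)
          omega
        · rcases Nat.lt_or_ge i (2*k) with hc2 | hc2
          · have e1 : i / k = 1 := by
              have h2 := div_cancel k 1 (i-k) (by omega) (by omega)
              rw [show k*1+(i-k) = i by omega] at h2; exact h2
            have e2 : i % k = i - k := by
              have h3 := Nat.div_add_mod i k; rw [e1] at h3; omega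
            rw [e1, e2] at hi2
            have := Nat.mod_self (2*k+1)
            omega
          · have e0 : i = 2*k := by omega
            subst e0
            have e1 : (2*k) / k = 2 := by
              have h2 := div_cancel k 2 0 (by omega) (by omega)
              rw [show k*2+0 = 2*k by omega] at h2; exact h2
            have e2 : (2*k) % k = 0 := by
              have h3 := Nat.div_add_mod (2*k) k; rw [e1] at h3; omega
            rw [e1, e2] at hi2
            have := mod_val (2*k+1) (2*k+2) (by omega) (by omega) (by omega)
            omega
      have := Finset.card_le_card hsub
      simpa using this
    omega
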